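/- arXiv:1506.05260 — 6 statements merged into one kernel-verified Lean document; each statement's English description precedes it below -/
import Mathlib

section
/- The Jacobi matrix of the map E : ℝ^{r+1} → ℝ^{r+1} whose j-th coordinate function is the j-th elementary symmetric polynomial e_j(x_1,...,x_{r+1}) has determinant equal to the Vandermonde product ∏_{1 ≤ i < j ≤ r+1} (x_i - x_j) (up to sign convention on the ordering of factors). -/
open Finset

lemma sum_powersetCard_insert {α : Type*} [DecidableEq α] {a : α} {t : Finset α} (h : a ∉ t)
    (f : α → ℝ) (m : ℕ) :
    (∑ s ∈ powersetCard (m+1) (insert a t), ∏ k ∈ s, f k) =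
    (∑ s ∈ powersetCard (m+1) t, ∏ k ∈ s, f k) + f a * ∑ s ∈ powersetCard m t, ∏ k ∈ s, f k := by
  have hnot : ∀ u ∈ powersetCard m t, a ∉ u := fun u hu ha =>
    h ((mem_powersetCard.1 hu).1 ha)
  rw [powersetCard_succ_insert h, sum_union, sum_image, mul_sum]
  · congr 1
    exact sum_congr rfl fun s hs => prod_insert (hnot s hs)
  · intro s hs u hu hsu
    exact (insert_erase_invOn.2.injOn (hnot s hs) (hnot u hu)) hsu
  · rw [disjoint_right]
    intro s hs hs'
    obtain ⟨u, hu, rfl⟩ := mem_image.1 hs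
    exact h ((mem_powersetCard.1 hs').1 (mem_insert_self a u))

/-- elementary symmetric function of all variables -/
noncomputable def esymmAll (r : ℕ) (x : Fin (r + 1) → ℝ) (m : ℕ) : ℝ :=
  ∑ s ∈ Finset.powersetCard m (Finset.univ : Finset (Fin (r+1))), ∏ k ∈ s, x k

lemma esymmAll_zero (r : ℕ) (x : Fin (r+1) → ℝ) : esymmAll r x 0 = 1 := by
  simp [esymmAll]

lemma erase_key (r : ℕ) (x : Fin (r + 1) → ℝ) (j : Fin (r + 1)) (n : ℕ) :
    (∑ s ∈ Finset.powersetCard n (Finset.univ.erase j), ∏ k ∈ s, x k) =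
    ∑ k ∈ Finset.range (n + 1), (-1 : ℝ) ^ k * x j ^ k * esymmAll r x (n - k) := by
  induction n with
  | zero => simp [esymmAll_zero]
  | succ n ih =>
    have hins : insert j ((Finset.univ : Finset (Fin (r+1))).erase j) = Finset.univ :=
      insert_erase (mem_univ j)
    have hsplit := sum_powersetCard_insert (notMem_erase j univ) x n
    rw [hins] at hsplit
    have : (∑ s ∈ Finset.powersetCard (n+1) (Finset.univ.erase j), ∏ k ∈ s, x k)
        = esymmAll r x (n+1) - x j * ∑ s ∈ Finset.powersetCard n (Finset.univ.erase j),
            ∏ k ∈ s, x k := by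
      rw [esymmAll]; linarith [hsplit]
    rw [this, ih, Finset.sum_range_succ' (fun k => (-1 : ℝ) ^ k * x j ^ k * esymmAll r x (n+1-k))]
    simp only [Nat.succ_sub_succ_eq_sub, pow_zero, one_mul, Nat.sub_zero]
    rw [Finset.mul_sum, sub_eq_add_neg, ← Finset.sum_neg_distrib, add_comm]
    congr 1
    apply sum_congr rfl
    intro k _
    ring


/-- The Jacobi matrix of the map `E : ℝ^(r+1) → ℝ^(r+1)` given by the elementary
symmetric polynomials: its `(i,j)` entry is `∂e_(i+1)/∂x_j = e_i(x₁,…,x̂_j,…,x_{r+1})`. -/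
noncomputable def jacobiEsymm (r : ℕ) (x : Fin (r + 1) → ℝ) :
    Matrix (Fin (r + 1)) (Fin (r + 1)) ℝ :=
  fun i j => ∑ s ∈ Finset.powersetCard i.val (Finset.univ.erase j), ∏ k ∈ s, x k


noncomputable def lowerA (r : ℕ) (x : Fin (r + 1) → ℝ) :
    Matrix (Fin (r + 1)) (Fin (r + 1)) ℝ :=
  fun i k => if (k : ℕ) ≤ (i : ℕ) then (-1 : ℝ) ^ (k : ℕ) * esymmAll r x (i.val - k.val) else 0

lemma jacobi_factor (r : ℕ) (x : Fin (r + 1) → ℝ) :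
    jacobiEsymm r x = lowerA r x * (Matrix.vandermonde x).transpose := by
  ext i j
  rw [Matrix.mul_apply]
  show _ = ∑ k : Fin (r+1), lowerA r x i k * x j ^ (k : ℕ)
  have : ∀ k : Fin (r+1), lowerA r x i k * x j ^ (k : ℕ)
      = (fun m : ℕ => if m ≤ (i : ℕ) then (-1 : ℝ) ^ m * esymmAll r x (i.val - m) * x j ^ m else 0) k := by
    intro k
    simp only [lowerA]
    split <;> simp
  rw [Finset.sum_congr rfl (fun k _ => this k),
    Fin.sum_univ_eq_sum_range
      (fun m => if m ≤ (i : ℕ) then (-1 : ℝ) ^ m * esymmAll r x (i.val - m) * x j ^ m else 0)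
      (r+1),
    Finset.sum_ite, Finset.sum_const_zero, add_zero]
  have hf : Finset.filter (fun m => m ≤ (i : ℕ)) (Finset.range (r+1))
      = Finset.range (i.val + 1) := by
    ext m
    simp only [mem_filter, mem_range]
    omega
  rw [hf, jacobiEsymm, erase_key r x j i.val]
  exact Finset.sum_congr rfl fun k _ => by ring

lemma det_lowerA (r : ℕ) (x : Fin (r + 1) → ℝ) :
    (lowerA r x).det = ∏ i : Fin (r + 1), (-1 : ℝ) ^ (i : ℕ) := by
  rw [Matrix.det_of_lowerTriangular]
  · exact Finset.prod_congr rfl fun i _ => by simp [lowerA, esymmAll_zero]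
  · intro i j h
    have hji : ¬ ((j : ℕ) ≤ (i : ℕ)) := not_le.2 h
    simp [lowerA, hji]

/-- The determinant of the Jacobi matrix of the elementary symmetric polynomial map is
the Vandermonde product `∏_{i<j} (x_i - x_j)`. -/
theorem det_jacobiEsymm (r : ℕ) (x : Fin (r + 1) → ℝ) :
    (jacobiEsymm r x).det = ∏ i : Fin (r + 1), ∏ j ∈ Finset.Ioi i, (x i - x j) := by
  rw [jacobi_factor, Matrix.det_mul, Matrix.det_transpose, Matrix.det_vandermonde, det_lowerA]
  have hsign : ∀ i : Fin (r+1), (∏ j ∈ Finset.Ioi i, (x i - x j)) =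
      (-1 : ℝ) ^ (Finset.Ioi i).card * ∏ j ∈ Finset.Ioi i, (x j - x i) := by
    intro i
    rw [← Finset.prod_const, ← Finset.prod_mul_distrib]
    exact Finset.prod_congr rfl fun j _ => by ring
  rw [Finset.prod_congr rfl fun i _ => hsign i, Finset.prod_mul_distrib]
  congr 1
  rw [Finset.prod_pow_eq_pow_sum, Finset.prod_pow_eq_pow_sum]
  congr 1
  have hcard : ∀ i : Fin (r+1), (Finset.Ioi i).card = r - i.val := by
    intro i
    rw [Fin.card_Ioi]
    omega
  simp only [hcard]
  rw [Fin.sum_univ_eq_sum_range (fun k => k), Fin.sum_univ_eq_sum_range (fun k => r - k)]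
  have := Finset.sum_range_reflect (fun j => j) (r+1)
  simpa using this.symm
end

section
/- The map F : D² → ℝ⁵ defined by F(t_2, x) = (-2x t_2, t_2, -3x², -t_2 x², 2x(t_2² - 1)) on the closed unit disc D² = {(t_2,x) : t_2² + x² ≤ 1} is injective. -/
/-- The map `F(t₂,x) = (-2xt₂, t₂, -3x², -t₂x², 2x(t₂²-1))`. -/
noncomputable def Fmap (p : ℝ × ℝ) : Fin 5 → ℝ :=
  ![-2 * p.2 * p.1, p.1, -3 * p.2 ^ 2, -p.1 * p.2 ^ 2, 2 * p.2 * (p.1 ^ 2 - 1)]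

/-- `F` is injective on the closed unit disc. -/
theorem Fmap_injOn : Set.InjOn Fmap {p : ℝ × ℝ | p.1 ^ 2 + p.2 ^ 2 ≤ 1} := by
  intro a _ b _ h
  have h0 := congrFun h 0
  have h1 := congrFun h 1
  have h4 : 2 * a.2 * (a.1 ^ 2 - 1) = 2 * b.2 * (b.1 ^ 2 - 1) := congrFun h 4
  simp only [Fmap, Matrix.cons_val_zero, Matrix.cons_val_one, Matrix.head_cons] at h0 h1
  rw [h1] at h0 h4
  have hx : a.2 = b.2 := by linear_combination (-b.1 / 2) * h0 - (1 / 2) * h4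
  exact Prod.ext h1 hx
end

section
/- The map F(t_2, x) = (-2x t_2, t_2, -3x², -t_2 x², 2x(t_2² - 1)) is a smooth embedding of the closed unit disc D² into ℝ⁵, i.e. it is injective and its differential has rank 2 at every point of D². -/
/-- The `5 × 2` matrix of partial derivatives of `F` at `(t₂, x)`. -/
noncomputable def FmapJacobi (t₂ x : ℝ) : Matrix (Fin 5) (Fin 2) ℝ :=
  !![-2 * x, -2 * t₂;
     1, 0;
     0, -6 * x;
     -x ^ 2, -2 * t₂ * x;
     4 * x * t₂, 2 * (t₂ ^ 2 - 1)]

lemma FmapJacobi_injective (t₂ x : ℝ) :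
    Function.Injective (FmapJacobi t₂ x).mulVecLin := by
  rw [← LinearMap.ker_eq_bot, LinearMap.ker_eq_bot']
  intro v hv
  have h0 := congrFun hv 0
  have h1 := congrFun hv 1
  have h2 := congrFun hv 2
  have h4 := congrFun hv 4
  simp [FmapJacobi, Matrix.mulVec, dotProduct, Fin.sum_univ_two] at h0 h1 h2 h4
  have hv0 : v 0 = 0 := by linarith
  rw [hv0] at h0 h4
  have hv1 : v 1 = 0 := by
    rcases h2 with hx | hv1
    · rcases eq_or_ne t₂ 0 with ht | ht
      · rw [ht] at h4; nlinarith [h4]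
      · have : -2 * t₂ * v 1 = 0 := by linarith [h0]
        have := mul_eq_zero.1 this
        rcases this with h | h
        · exact absurd (by linarith : t₂ = 0) ht
        · exact h
    · exact hv1
  funext i
  fin_cases i <;> simp [hv0, hv1]

lemma FmapJacobi_rank (t₂ x : ℝ) : (FmapJacobi t₂ x).rank = 2 := by
  have := LinearMap.finrank_range_of_inj (FmapJacobi_injective t₂ x)
  rw [Matrix.rank, this]
  simp

/-- `F` is a smooth embedding of the closed unit disc into `ℝ⁵`: it is injective
on the disc and its differential has rank `2` at every point of the disc. -/
theorem Fmap_embedding :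
    Set.InjOn Fmap {p : ℝ × ℝ | p.1 ^ 2 + p.2 ^ 2 ≤ 1} ∧
    ∀ p : ℝ × ℝ, p.1 ^ 2 + p.2 ^ 2 ≤ 1 → (FmapJacobi p.1 p.2).rank = 2 := by
  constructor
  · intro p hp q hq h
    simp only [Set.mem_setOf_eq] at hp hq
    have h1 := congrFun h 1
    have h2 := congrFun h 2
    have h4 := congrFun h 4
    simp [Fmap] at h1 h2 h4
    have ht : p.1 = q.1 := h1
    have hx : p.2 = q.2 := by
      rcases eq_or_ne (p.1 ^ 2) 1 with h1t | h1t
      · have hx0 : p.2 = 0 := by nlinarith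
        have hx0' : q.2 = 0 := by nlinarith
        rw [hx0, hx0']
      · have : (p.2 - q.2) * (p.1 ^ 2 - 1) = 0 := by
          linear_combination h4 / 2 - q.2 * (p.1 + q.1) * ht
        rcases mul_eq_zero.1 this with h | h
        · linarith
        · exact absurd (by linarith : p.1 ^ 2 = 1) h1t
    exact Prod.ext ht hx
  · intro p _
    exact FmapJacobi_rank p.1 p.2
end

section
/- For every point (t_2, x) in the closed unit disc, the two partial-derivative vectors ∂F/∂t_2, ∂F/∂x of F(t_2,x) = (-2x t_2, t_2, -3x², -t_2 x², 2x(t_2² - 1)) together with the three vectors v_1 = (0,0,-1,t_2,2x), v_2 = (3 - 3t_2² - 6x², -3x³, x t_2, 3x, -t_2), v_3 = (-4x, -7x², t_2, 1, 0) form a basis of ℝ⁵. -/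
set_option maxRecDepth 4000

set_option maxHeartbeats 4000000 in
private lemma det_ne_zero_aux (t₂ x : ℝ) (h : t₂ ^ 2 + x ^ 2 ≤ 1) :
    (Matrix.of ![(![-2 * x, 1, 0, -x ^ 2, 4 * x * t₂] : Fin 5 → ℝ),
        ![-2 * t₂, 0, -6 * x, -2 * t₂ * x, 2 * (t₂ ^ 2 - 1)],
        ![0, 0, -1, t₂, 2 * x],
        ![3 - 3 * t₂ ^ 2 - 6 * x ^ 2, -3 * x ^ 3, x * t₂, 3 * x, -t₂],
        ![-4 * x, -7 * x ^ 2, t₂, 1, 0]]).det ≠ 0 := by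
  have hd : (Matrix.of ![(![-2 * x, 1, 0, -x ^ 2, 4 * x * t₂] : Fin 5 → ℝ),
        ![-2 * t₂, 0, -6 * x, -2 * t₂ * x, 2 * (t₂ ^ 2 - 1)],
        ![0, 0, -1, t₂, 2 * x],
        ![3 - 3 * t₂ ^ 2 - 6 * x ^ 2, -3 * x ^ 3, x * t₂, 3 * x, -t₂],
        ![-4 * x, -7 * x ^ 2, t₂, 1, 0]]).det =
      -6 - 48*x^2 - 102*x^4 - 240*x^6 - 360*x^8 + 4*t₂^2 + 24*t₂^2*x^2
        + 394*t₂^2*x^4 - 1136*t₂^2*x^6 + 4*t₂^4 - 16*t₂^4*x^2 - 646*t₂^4*x^4 - 6*t₂^6 := by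
    simp [Matrix.det_succ_row_zero, Fin.sum_univ_succ, Fin.succAbove]
    ring
  rw [hd]
  nlinarith [sq_nonneg t₂, sq_nonneg x, sq_nonneg (t₂*x), sq_nonneg (t₂^2), sq_nonneg (x^2),
    sq_nonneg (t₂^2*x^2), sq_nonneg (x^3), sq_nonneg (t₂*x^2), sq_nonneg (t₂^2*x),
    sq_nonneg (x^4), sq_nonneg (t₂^3), mul_self_nonneg (1 - t₂^2 - x^2)]

/-- For every point `(t₂,x)` of the closed unit disc, the two partial derivative
vectors `∂F/∂t₂`, `∂F/∂x` of `F(t₂,x) = (-2xt₂, t₂, -3x², -t₂x², 2x(t₂²-1))`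
together with the framing vectors `v₁, v₂, v₃` form a basis of `ℝ⁵`. -/
theorem partials_and_framing_basis (t₂ x : ℝ) (h : t₂ ^ 2 + x ^ 2 ≤ 1) :
    LinearIndependent ℝ
      ![(![-2 * x, 1, 0, -x ^ 2, 4 * x * t₂] : Fin 5 → ℝ),
        ![-2 * t₂, 0, -6 * x, -2 * t₂ * x, 2 * (t₂ ^ 2 - 1)],
        ![0, 0, -1, t₂, 2 * x],
        ![3 - 3 * t₂ ^ 2 - 6 * x ^ 2, -3 * x ^ 3, x * t₂, 3 * x, -t₂],
        ![-4 * x, -7 * x ^ 2, t₂, 1, 0]] ∧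
    Submodule.span ℝ
      (Set.range ![(![-2 * x, 1, 0, -x ^ 2, 4 * x * t₂] : Fin 5 → ℝ),
        ![-2 * t₂, 0, -6 * x, -2 * t₂ * x, 2 * (t₂ ^ 2 - 1)],
        ![0, 0, -1, t₂, 2 * x],
        ![3 - 3 * t₂ ^ 2 - 6 * x ^ 2, -3 * x ^ 3, x * t₂, 3 * x, -t₂],
        ![-4 * x, -7 * x ^ 2, t₂, 1, 0]]) = ⊤ := by
  have hli : LinearIndependent ℝ
      ![(![-2 * x, 1, 0, -x ^ 2, 4 * x * t₂] : Fin 5 → ℝ),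
        ![-2 * t₂, 0, -6 * x, -2 * t₂ * x, 2 * (t₂ ^ 2 - 1)],
        ![0, 0, -1, t₂, 2 * x],
        ![3 - 3 * t₂ ^ 2 - 6 * x ^ 2, -3 * x ^ 3, x * t₂, 3 * x, -t₂],
        ![-4 * x, -7 * x ^ 2, t₂, 1, 0]] := by
    have := Matrix.linearIndependent_rows_iff_isUnit.mpr
      ((Matrix.isUnit_iff_isUnit_det _).mpr (isUnit_iff_ne_zero.mpr (det_ne_zero_aux t₂ x h)))
    exact this
  refine ⟨hli, hli.span_eq_top_of_card_eq_finrank ?_⟩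
  simp [Module.finrank_fin_fun]
end

section
/- If σ_2 maps r+1 = 3 pairwise distinct points (more generally, if the prim normal form σ_r : ℝ^{2r} → ℝ^{2r+1} maps r+1 pairwise distinct points) to a common point q = (t_1,...,t_{2r-1}, z_1, z_2), then z_1 = t_1 = ... = t_r = 0. That is, the closure of the set of (r+1)-tuple points of σ_r is contained in the r-dimensional linear subspace {z_1 = t_1 = ... = t_r = 0} of ℝ^{2r+1}. -/
open Finset Polynomial

/-- The Morin prim normal form `σ_r : ℝ^{2r} → ℝ^{2r+1}`. A point of the source is
`(t, x)` with `t = (t₁,…,t_{2r-1})` (zero-indexed: `t ⟨k⟩ = t_{k+1}`); its image is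
`(t, z₁, z₂)` with `z₁ = t₁x + ⋯ + t_r x^r` and
`z₂ = t_{r+1}x + ⋯ + t_{2r-1}x^{r-1} + x^{r+1}`. -/
noncomputable def sigmaR (r : ℕ) (p : (Fin (2 * r - 1) → ℝ) × ℝ) :
    (Fin (2 * r - 1) → ℝ) × ℝ × ℝ :=
  (p.1,
   ∑ k ∈ Finset.range r, (if h : k < 2 * r - 1 then p.1 ⟨k, h⟩ else 0) * p.2 ^ (k + 1),
   (∑ k ∈ Finset.range (r - 1),
      (if h : r + k < 2 * r - 1 then p.1 ⟨r + k, h⟩ else 0) * p.2 ^ (k + 1)) + p.2 ^ (r + 1))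

/-- If `σ_r` maps `r+1` pairwise distinct points to a common point
`q = (t₁,…,t_{2r-1}, z₁, z₂)`, then `z₁ = t₁ = ⋯ = t_r = 0`: the closure of the
set of `(r+1)`-tuple points of `σ_r` lies in the subspace `{z₁ = t₁ = ⋯ = t_r = 0}`. -/
theorem tuple_points_in_subspace (r : ℕ) (hr : 1 ≤ r)
    (q : (Fin (2 * r - 1) → ℝ) × ℝ × ℝ)
    (p : Fin (r + 1) → (Fin (2 * r - 1) → ℝ) × ℝ)
    (hp : Function.Injective p)
    (hq : ∀ j, sigmaR r (p j) = q) :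
    q.2.1 = 0 ∧ ∀ k : Fin (2 * r - 1), (k : ℕ) < r → q.1 k = 0 := by
  classical
  have hfst : ∀ j, (p j).1 = q.1 := fun j => congrArg Prod.fst (hq j)
  have hz : ∀ j, (∑ k ∈ Finset.range r,
      (if h : k < 2 * r - 1 then (p j).1 ⟨k, h⟩ else 0) * (p j).2 ^ (k + 1)) = q.2.1 :=
    fun j => congrArg (fun v => v.2.1) (hq j)
  set Q : ℝ[X] := (∑ k ∈ Finset.range r,
      C (if h : k < 2 * r - 1 then q.1 ⟨k, h⟩ else 0) * X ^ (k + 1)) - C q.2.1 with hQ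
  have hxinj : Function.Injective (fun j => (p j).2) := by
    intro i j h
    apply hp
    have := (hfst i).trans (hfst j).symm
    exact Prod.ext this h
  have heval : ∀ j, Q.eval ((p j).2) = 0 := by
    intro j
    have := hz j
    rw [hfst j] at this
    simp only [hQ, eval_sub, eval_finset_sum, eval_mul, eval_C, eval_pow, eval_X, sub_eq_zero]
    rw [← this]
  have hdeg : Q.natDegree < Fintype.card (Fin (r + 1)) := by
    rw [Fintype.card_fin]
    have h1 : Q.natDegree ≤ r := by
      apply le_trans (natDegree_sub_le _ _)
      simp only [natDegree_C, max_le_iff]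
      constructor
      · apply le_trans (natDegree_sum_le _ _)
        simp only [Finset.fold_max_le]
        refine ⟨Nat.zero_le _, fun k hk => ?_⟩
        apply le_trans (natDegree_C_mul_le _ _)
        simp only [natDegree_X_pow]
        exact Nat.succ_le_of_lt (Finset.mem_range.mp hk)
      · exact Nat.zero_le _
    omega
  have hQ0 : Q = 0 := eq_zero_of_natDegree_lt_card_of_eval_eq_zero Q hxinj heval hdeg
  have hcoeff : ∀ n, Q.coeff n = 0 := by intro n; rw [hQ0]; simp
  have hz1 : q.2.1 = 0 := by
    have := hcoeff 0
    simp [hQ, coeff_X_pow] at this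
    linarith [this]
  refine ⟨hz1, fun k hk => ?_⟩
  have := hcoeff ((k : ℕ) + 1)
  simp only [hQ, coeff_sub, finset_sum_coeff, coeff_C_mul, coeff_X_pow, coeff_C,
    Nat.succ_ne_zero, if_false, sub_zero, mul_ite, mul_one, mul_zero] at this
  simp only [add_left_inj] at this
  rw [Finset.sum_ite_eq (Finset.range r)] at this
  simp only [Finset.mem_range] at this
  rw [if_pos hk] at this
  have hlt : (k : ℕ) < 2 * r - 1 := k.2
  rw [dif_pos hlt] at this
  simpa using this
end

section
/- Under the identification of (t_{r+1},...,t_{2r-1}, z_2) with the monic polynomial P(x) = x^{r+1} + t_{2r-1} x^{r-1} + ... + t_{r+1} x - z_2 (which has zero coefficient for x^r), the point (0,...,0, t_{r+1},...,t_{2r-1}, 0, z_2) lies in the closure of the set of (r+1)-tuple points of σ_r if and only if all roots of P are real. -/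
open Finset Polynomial

/-- The set of `(r+1)`-tuple points of `σ_r`: points of the target with exactly
`r+1` distinct preimages. -/
noncomputable def tuplePoints (r : ℕ) : Set ((Fin (2 * r - 1) → ℝ) × ℝ × ℝ) :=
  {q | (sigmaR r ⁻¹' {q}).ncard = r + 1}

/-- The monic polynomial `P(x) = x^{r+1} + t_{2r-1}x^{r-1} + ⋯ + t_{r+1}x - z₂`
associated to the point `(0,…,0,t_{r+1},…,t_{2r-1},0,z₂)`. -/
noncomputable def assocPoly (r : ℕ) (t : Fin (2 * r - 1) → ℝ) (z₂ : ℝ) : Polynomial ℝ :=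
  X ^ (r + 1) +
    (∑ k ∈ Finset.range (r - 1),
      C (if h : r + k < 2 * r - 1 then t ⟨r + k, h⟩ else 0) * X ^ (k + 1)) - C z₂

variable {r : ℕ} (t : Fin (2 * r - 1) → ℝ) (z₂ : ℝ)

lemma assoc_eq : assocPoly r t z₂ = X ^ (r+1) +
    ((∑ k ∈ Finset.range (r - 1),
      C (if h : r + k < 2 * r - 1 then t ⟨r + k, h⟩ else 0) * X ^ (k + 1)) - C z₂) := by
  rw [assocPoly, add_sub_assoc]

lemma assoc_small : ((∑ k ∈ Finset.range (r - 1),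
      C (if h : r + k < 2 * r - 1 then t ⟨r + k, h⟩ else 0) * X ^ (k + 1)) - C z₂).degree
      < ((r + 1 : ℕ) : WithBot ℕ) := by
  apply lt_of_le_of_lt (degree_sub_le _ _)
  rw [max_lt_iff]
  constructor
  · apply lt_of_le_of_lt (degree_sum_le _ _)
    rw [Finset.sup_lt_iff (by exact_mod_cast WithBot.bot_lt_coe _)]
    intro k hk
    apply lt_of_le_of_lt (degree_C_mul_X_pow_le _ _)
    have hk' : k < r - 1 := Finset.mem_range.1 hk
    exact_mod_cast (by omega : k + 1 < r + 1)
  · exact lt_of_le_of_lt degree_C_le (by exact_mod_cast Nat.succ_pos r)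

lemma assoc_monic : (assocPoly r t z₂).Monic := by
  rw [assoc_eq]; exact monic_X_pow_add (assoc_small t z₂)

lemma assoc_natDegree : (assocPoly r t z₂).natDegree = r + 1 := by
  have : (assocPoly r t z₂).degree = ((r + 1 : ℕ) : WithBot ℕ) := by
    rw [assoc_eq, degree_add_eq_left_of_degree_lt, degree_X_pow]
    rw [degree_X_pow]; exact assoc_small t z₂
  exact natDegree_eq_of_degree_eq_some this

lemma assoc_coeff_zero (hr : 1 ≤ r) : (assocPoly r t z₂).coeff 0 = -z₂ := by
  simp [assocPoly, coeff_X_pow, coeff_C, finset_sum_coeff, coeff_C_mul]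

lemma assoc_coeff_r (hr : 1 ≤ r) : (assocPoly r t z₂).coeff r = 0 := by
  simp only [assocPoly, coeff_sub, coeff_add, coeff_X_pow, finset_sum_coeff, coeff_C_mul,
    coeff_C]
  rw [Finset.sum_eq_zero, if_neg (by omega), if_neg (by omega)]
  · ring
  · intro k hk
    have hk' : k < r - 1 := Finset.mem_range.1 hk
    rw [if_neg (by omega), mul_zero]

lemma assoc_coeff_succ (hr : 1 ≤ r) {k : ℕ} (hk : k < r - 1) :
    (assocPoly r t z₂).coeff (k + 1) = t ⟨r + k, by omega⟩ := by
  simp only [assocPoly, coeff_sub, coeff_add, coeff_X_pow, finset_sum_coeff, coeff_C_mul,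
    coeff_C]
  rw [Finset.sum_eq_single k]
  rotate_left
  · intro j hj hjk
    rw [if_neg (by omega), mul_zero]
  · intro h; exact absurd (Finset.mem_range.2 hk) h
  rw [if_pos rfl, if_neg (by omega : ¬ (k + 1 = r + 1)), if_neg (by omega : ¬ (k + 1 = 0)),
    dif_pos (by omega : r + k < 2 * r - 1)]
  ring

lemma assoc_eval (x : ℝ) : (assocPoly r t z₂).eval x =
    (∑ k ∈ Finset.range (r - 1),
      (if h : r + k < 2 * r - 1 then t ⟨r + k, h⟩ else 0) * x ^ (k + 1)) + x ^ (r + 1) - z₂ := by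
  simp [assocPoly, eval_finset_sum]; ring

lemma assoc_eval_map (z : ℂ) : ((assocPoly r t z₂).map (algebraMap ℝ ℂ)).eval z =
    z ^ (r + 1) + (∑ k ∈ Finset.range (r - 1),
      ((if h : r + k < 2 * r - 1 then t ⟨r + k, h⟩ else 0 : ℝ) : ℂ) * z ^ (k + 1)) - (z₂ : ℂ) := by
  simp [assocPoly, Polynomial.map_sum, eval_finset_sum]
open Finset Polynomial

lemma continuous_coeff_prod {n : ℕ} (F : Finset (Fin n)) :
    ∀ k, Continuous fun v : Fin n → ℝ => (∏ i ∈ F, (X - C (v i))).coeff k := by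
  classical
  induction F using Finset.induction_on with
  | empty => intro k; simpa using continuous_const
  | @insert a F ha ih =>
    intro k
    have key : ∀ v : Fin n → ℝ, (∏ i ∈ insert a F, (X - C (v i))).coeff k =
        (if h : k = 0 then 0 else (∏ i ∈ F, (X - C (v i))).coeff (k - 1))
          - v a * (∏ i ∈ F, (X - C (v i))).coeff k := by
      intro v
      rw [Finset.prod_insert ha, sub_mul, coeff_sub, coeff_C_mul]
      congr 1
      rcases k with _ | k
      · simp
      · simp [coeff_X_mul]
    simp only [key]
    apply Continuous.sub
    · rcases k with _ | k
      · simpa using continuous_const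
      · simpa using ih k
    · exact (continuous_apply a).mul (ih k)

lemma abs_im_pow_le_abs_eval (M : Multiset ℂ) (hM : ∀ z ∈ M, z.im = 0) (w : ℂ) :
    |w.im| ^ Multiset.card M ≤ ‖(((M.map fun z => X - C z).prod).eval w)‖ := by
  induction M using Multiset.induction_on with
  | empty => simp
  | cons a M ih =>
    rw [Multiset.map_cons, Multiset.prod_cons, Multiset.card_cons, eval_mul, norm_mul, pow_succ']
    have h1 : |w.im| ≤ ‖((X - C a).eval w)‖ := by
      have : ((X : ℂ[X]) - C a).eval w = w - a := by simp
      rw [this]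
      have him : (w - a).im = w.im := by
        simp [Complex.sub_im, hM a (Multiset.mem_cons_self a M)]
      calc |w.im| = |(w - a).im| := by rw [him]
        _ ≤ ‖(w - a)‖ := Complex.abs_im_le_norm _
    exact mul_le_mul h1 (ih fun z hz => hM z (Multiset.mem_cons_of_mem hz))
      (pow_nonneg (abs_nonneg _) _) (norm_nonneg _)

lemma splits_iff_forall_abs {P : Polynomial ℝ} (hm : P.Monic) {d : ℕ} (hd : P.natDegree = d)
    (hd1 : 1 ≤ d) :
    P.Splits ↔
      ∀ z : ℂ, |z.im| ^ d ≤ ‖((P.map (algebraMap ℝ ℂ)).eval z)‖ := by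
  constructor
  · intro hs z
    have hcard : Multiset.card P.roots = d := by rw [← hd]; exact splits_iff_card_roots.1 hs
    have hrepr := hs.eq_prod_roots_of_monic hm
    have : P.map (algebraMap ℝ ℂ) =
        ((P.roots.map (fun a : ℝ => (a : ℂ))).map fun z => X - C z).prod := by
      conv_lhs => rw [hrepr]
      rw [Polynomial.map_multiset_prod, Multiset.map_map, Multiset.map_map]
      congr 1
      apply Multiset.map_congr rfl
      intro a _
      simp
    rw [this]
    have := abs_im_pow_le_abs_eval (P.roots.map (fun a : ℝ => (a : ℂ)))
      (by intro z hz; obtain ⟨a, _, rfl⟩ := Multiset.mem_map.1 hz; simp) z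
    simpa [hcard] using this
  · intro hineq
    set Q := P.map (algebraMap ℝ ℂ) with hQ
    have hQm : Q.Monic := hm.map _
    have hQd : Q.natDegree = d := by rw [hQ, natDegree_map, hd]
    have hQs : Q.Splits := IsAlgClosed.splits Q
    have hQcard : Multiset.card Q.roots = d := by rw [← hQd]; exact splits_iff_card_roots.1 hQs
    have hreal : ∀ z ∈ Q.roots, z.im = 0 := by
      intro z hz
      have hz0 : Q.eval z = 0 := (mem_roots hQm.ne_zero).1 hz
      have := hineq z
      rw [hz0] at this
      simp only [norm_zero] at this
      have habs : |z.im| = 0 := by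
        by_contra h
        have : 0 < |z.im| ^ d := pow_pos (lt_of_le_of_ne (abs_nonneg _) (Ne.symm h)) d
        linarith
      simpa [abs_eq_zero] using habs
    have hmap : Polynomial.map (algebraMap ℝ ℂ)
        ((Q.roots.map Complex.re).map fun a => X - C a).prod
        = (Q.roots.map fun z => X - C z).prod := by
      rw [Polynomial.map_multiset_prod, Multiset.map_map, Multiset.map_map]
      congr 1
      apply Multiset.map_congr rfl
      intro z hz
      have hzre : ((z.re : ℝ) : ℂ) = z := Complex.ext rfl (by simp [hreal z hz])
      simp [Function.comp_def, hzre]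
    have hP_eq : P = ((Q.roots.map Complex.re).map fun a => X - C a).prod := by
      apply Polynomial.map_injective (algebraMap ℝ ℂ) Complex.ofReal_injective
      rw [hmap, ← hQs.eq_prod_roots_of_monic hQm]
    rw [splits_iff_card_roots, hd]
    conv_lhs => rw [hP_eq]
    rw [roots_multiset_prod_X_sub_C, Multiset.card_map, hQcard]

lemma tuple_splits {r : ℕ} (hr : 1 ≤ r) {q : (Fin (2 * r - 1) → ℝ) × ℝ × ℝ}
    (hq : q ∈ tuplePoints r) : (assocPoly r q.1 q.2.2).Splits := by
  classical
  set S := sigmaR r ⁻¹' {q} with hS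
  have hn : S.ncard = r + 1 := hq
  have hfin : S.Finite := Set.finite_of_ncard_ne_zero (by omega)
  set F := hfin.toFinset with hF
  have hFcard : F.card = r + 1 := by
    rw [hF, ← Set.ncard_eq_toFinset_card S hfin, hn]
  have hfst : ∀ p ∈ F, p.1 = q.1 := by
    intro p hp
    have : sigmaR r p = q := by simpa [hS] using (hfin.mem_toFinset.1 hp)
    exact congrArg Prod.fst this
  have hinj : Set.InjOn Prod.snd (F : Set ((Fin (2 * r - 1) → ℝ) × ℝ)) := by
    intro p hp p' hp' h
    exact Prod.ext (by rw [hfst p (Finset.mem_coe.1 hp), hfst p' (Finset.mem_coe.1 hp')]) h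
  have hGcard : (F.image Prod.snd).card = r + 1 := by
    rw [Finset.card_image_of_injOn (by simpa using hinj), hFcard]
  have hroot : ∀ x ∈ F.image Prod.snd, (assocPoly r q.1 q.2.2).eval x = 0 := by
    intro x hx
    obtain ⟨p, hp, rfl⟩ := Finset.mem_image.1 hx
    have hpq : sigmaR r p = q := by simpa [hS] using (hfin.mem_toFinset.1 hp)
    have h3 : (∑ k ∈ Finset.range (r - 1),
        (if h : r + k < 2 * r - 1 then p.1 ⟨r + k, h⟩ else 0) * p.2 ^ (k + 1)) + p.2 ^ (r + 1)
        = q.2.2 := by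
      have := congrArg (fun w => w.2.2) hpq
      simpa [sigmaR] using this
    rw [assoc_eval, ← hfst p hp, h3]
    ring
  have hsub : F.image Prod.snd ⊆ (assocPoly r q.1 q.2.2).roots.toFinset := by
    intro x hx
    rw [Multiset.mem_toFinset, mem_roots (assoc_monic q.1 q.2.2).ne_zero]
    exact hroot x hx
  have hcard_le : r + 1 ≤ Multiset.card (assocPoly r q.1 q.2.2).roots := by
    calc r + 1 = (F.image Prod.snd).card := hGcard.symm
      _ ≤ (assocPoly r q.1 q.2.2).roots.toFinset.card := Finset.card_le_card hsub
      _ ≤ Multiset.card (assocPoly r q.1 q.2.2).roots := Multiset.toFinset_card_le _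
  rw [splits_iff_card_roots]
  refine le_antisymm ?_ ?_
  · exact card_roots' _
  · rw [assoc_natDegree]; exact hcard_le

lemma closure_subset_ineq {r : ℕ} (hr : 1 ≤ r) :
    closure (tuplePoints r) ⊆ {q : (Fin (2 * r - 1) → ℝ) × ℝ × ℝ |
      ∀ z : ℂ, |z.im| ^ (r + 1) ≤
        ‖(((assocPoly r q.1 q.2.2).map (algebraMap ℝ ℂ)).eval z)‖} := by
  apply closure_minimal
  · intro q hq z
    exact (splits_iff_forall_abs (assoc_monic q.1 q.2.2) (assoc_natDegree q.1 q.2.2)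
      (by omega)).1 (tuple_splits hr hq) z
  · have hset : {q : (Fin (2 * r - 1) → ℝ) × ℝ × ℝ |
        ∀ z : ℂ, |z.im| ^ (r + 1) ≤
          ‖(((assocPoly r q.1 q.2.2).map (algebraMap ℝ ℂ)).eval z)‖} =
        ⋂ z : ℂ, {q : (Fin (2 * r - 1) → ℝ) × ℝ × ℝ | |z.im| ^ (r + 1) ≤
          ‖(((assocPoly r q.1 q.2.2).map (algebraMap ℝ ℂ)).eval z)‖} := by
      ext q; simp [Set.mem_iInter]
    rw [hset]
    apply isClosed_iInter
    intro z
    apply isClosed_le continuous_const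
    apply continuous_norm.comp
    have heq : (fun q : (Fin (2 * r - 1) → ℝ) × ℝ × ℝ =>
        ((assocPoly r q.1 q.2.2).map (algebraMap ℝ ℂ)).eval z)
        = fun q : (Fin (2 * r - 1) → ℝ) × ℝ × ℝ => z ^ (r + 1) +
          (∑ k ∈ Finset.range (r - 1),
            ((if h : r + k < 2 * r - 1 then q.1 ⟨r + k, h⟩ else 0 : ℝ) : ℂ) * z ^ (k + 1))
          - (q.2.2 : ℂ) := by
      funext q; exact assoc_eval_map q.1 q.2.2 z
    rw [heq]
    apply Continuous.sub
    · apply Continuous.add continuous_const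
      apply continuous_finset_sum
      intro k _
      apply Continuous.mul _ continuous_const
      by_cases h : r + k < 2 * r - 1
      · simp only [dif_pos h]
        exact Complex.continuous_ofReal.comp ((continuous_apply _).comp continuous_fst)
      · simp only [dif_neg h]; exact continuous_const
    · exact Complex.continuous_ofReal.comp (continuous_snd.comp continuous_snd)

lemma eval_expand {r : ℕ} (hr : 1 ≤ r) {Q : Polynomial ℝ} (hm : Q.Monic)
    (hdeg : Q.natDegree = r + 1) (hcr : Q.coeff r = 0) (x : ℝ) :
    Q.eval x = (∑ k ∈ Finset.range (r - 1), Q.coeff (k + 1) * x ^ (k + 1))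
      + x ^ (r + 1) + Q.coeff 0 := by
  obtain ⟨m, rfl⟩ : ∃ m, r = m + 1 := ⟨r - 1, by omega⟩
  have h1 : Q.eval x = ∑ k ∈ Finset.range (m + 3), Q.coeff k * x ^ k := by
    rw [eval_eq_sum_range, hdeg]
  have hlead : Q.coeff (m + 2) = 1 := by
    have := hm.coeff_natDegree; rwa [hdeg] at this
  rw [h1, Finset.sum_range_succ, Finset.sum_range_succ, Finset.sum_range_succ',
    hcr, hlead]
  simp only [Nat.add_sub_cancel, pow_zero, mul_one, one_mul]
  ring

lemma splits_mem_closure {r : ℕ} (hr : 1 ≤ r) (t : Fin (2 * r - 1) → ℝ)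
    (ht : ∀ k : Fin (2 * r - 1), (k : ℕ) < r → t k = 0) (z₂ : ℝ)
    (hsp : (assocPoly r t z₂).Splits) :
    (t, (0 : ℝ), z₂) ∈ closure (tuplePoints r) := by
  classical
  set P := assocPoly r t z₂ with hP
  have hm : P.Monic := assoc_monic t z₂
  have hdeg : P.natDegree = r + 1 := assoc_natDegree t z₂
  have hroots_card : Multiset.card P.roots = r + 1 := by
    rw [← hdeg]; exact splits_iff_card_roots.1 hsp
  have hsum : P.roots.sum = 0 := by
    have h1 := hsp.nextCoeff_eq_neg_sum_roots_of_monic hm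
    have h2 : P.nextCoeff = 0 := by
      rw [nextCoeff_of_natDegree_pos (by omega), hdeg]
      simpa using assoc_coeff_r t z₂ hr
    rw [h2] at h1
    linarith [h1]
  set L := P.roots.sort (· ≤ ·) with hL
  have hLlen : L.length = r + 1 := by rw [hL, Multiset.length_sort]; exact hroots_card
  have hLsum : L.sum = 0 := by
    have : (L : Multiset ℝ) = P.roots := Multiset.sort_eq _ _
    calc L.sum = (L : Multiset ℝ).sum := by rw [Multiset.sum_coe]
      _ = 0 := by rw [this]; exact hsum
  set c : ℝ := (r : ℝ) / 2 with hc
  set s : ℝ → Fin (r + 1) → ℝ :=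
    fun ε i => L.get (Fin.cast hLlen.symm i) + ε * ((i : ℕ) - c) with hs
  have hgetsum : ∑ i : Fin (r + 1), L.get (Fin.cast hLlen.symm i) = 0 := by
    have h0 : ∑ i : Fin (r + 1), L.get (Fin.cast hLlen.symm i)
        = ∑ j : Fin L.length, L.get j :=
      Fintype.sum_equiv (finCongr hLlen.symm) _ _ (fun i => rfl)
    rw [h0]
    have h1 := Fin.sum_univ_getElem L
    simp only [List.get_eq_getElem]
    rw [h1, hLsum]
  have hcsum : ∑ i : Fin (r + 1), (((i : ℕ) : ℝ) - c) = 0 := by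
    have h2 : (∑ i ∈ Finset.range (r + 1), (i : ℝ)) * 2 = (r + 1) * r := by
      have h3 := Finset.sum_range_id_mul_two (r + 1)
      have h4 := congrArg (fun n : ℕ => (n : ℝ)) h3
      push_cast at h4
      simpa using h4
    rw [Finset.sum_sub_distrib]
    rw [Fin.sum_univ_eq_sum_range (fun i => ((i : ℕ) : ℝ)) (r + 1)]
    simp only [Finset.sum_const, Finset.card_univ, Fintype.card_fin, nsmul_eq_mul, hc]
    push_cast
    linarith
  have hsum_s : ∀ ε, ∑ i, s ε i = 0 := by
    intro ε
    have expand : ∀ i : Fin (r + 1),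
        s ε i = L.get (Fin.cast hLlen.symm i) + ε * (((i : ℕ) : ℝ) - c) := fun i => rfl
    calc ∑ i, s ε i
        = ∑ i : Fin (r + 1), (L.get (Fin.cast hLlen.symm i) + ε * (((i : ℕ) : ℝ) - c)) :=
          Finset.sum_congr rfl (fun i _ => expand i)
      _ = 0 := by
          rw [Finset.sum_add_distrib, hgetsum, ← Finset.mul_sum, hcsum, mul_zero, add_zero]
  have hmono : ∀ ε > 0, StrictMono (s ε) := by
    intro ε hε i j hij
    have h1 : L.get (Fin.cast hLlen.symm i) ≤ L.get (Fin.cast hLlen.symm j) := by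
      apply List.Pairwise.rel_get_of_le (Multiset.pairwise_sort _ _)
      exact hij.le
    have h2 : ((i : ℕ) : ℝ) < ((j : ℕ) : ℝ) := by exact_mod_cast hij
    have e1 : s ε i = L.get (Fin.cast hLlen.symm i) + ε * (((i : ℕ) : ℝ) - c) := rfl
    have e2 : s ε j = L.get (Fin.cast hLlen.symm j) + ε * (((j : ℕ) : ℝ) - c) := rfl
    rw [e1, e2]
    have := mul_lt_mul_of_pos_left (sub_lt_sub_right h2 c) hε
    linarith
  set Q : ℝ → Polynomial ℝ := fun ε => ∏ i : Fin (r + 1), (X - C (s ε i)) with hQ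
  have hQm : ∀ ε, (Q ε).Monic :=
    fun ε => monic_prod_of_monic _ _ fun i _ => monic_X_sub_C _
  have hQdeg : ∀ ε, (Q ε).natDegree = r + 1 := by
    intro ε
    rw [hQ]
    rw [natDegree_prod _ _ fun i _ => X_sub_C_ne_zero _]
    simp
  have hQcr : ∀ ε, (Q ε).coeff r = 0 := by
    intro ε
    have hnc : (Q ε).nextCoeff = ∑ i : Fin (r + 1), -(s ε i) := by
      rw [hQ]
      rw [Monic.nextCoeff_prod _ _ fun i _ => monic_X_sub_C _]
      simp [nextCoeff_X_sub_C]
    have : (Q ε).nextCoeff = 0 := by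
      rw [hnc]
      have h5 : ∑ i : Fin (r + 1), -(s ε i) = -∑ i : Fin (r + 1), s ε i := by simp
      rw [h5, hsum_s ε, neg_zero]
    rwa [nextCoeff_of_natDegree_pos (by rw [hQdeg]; omega), hQdeg, Nat.add_sub_cancel] at this
  have hQ0 : Q 0 = P := by
    have h1 : Q 0 = ∏ i : Fin (r + 1), (X - C (L.get (Fin.cast hLlen.symm i))) := by
      show (∏ i : Fin (r + 1), (X - C (s 0 i))) = _
      apply Finset.prod_congr rfl
      intro i _
      simp [hs]
    have h2 : ∏ i : Fin (r + 1), (X - C (L.get (Fin.cast hLlen.symm i)))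
        = (L.map fun a => X - C a).prod := by
      have h0 : ∏ i : Fin (r + 1), (X - C (L.get (Fin.cast hLlen.symm i)))
          = ∏ j : Fin L.length, (X - C (L.get j)) :=
        Fintype.prod_equiv (finCongr hLlen.symm) _ _ (fun i => rfl)
      rw [h0]
      have h1' := Fin.prod_univ_fun_getElem L (fun a => X - C a)
      simp only [List.get_eq_getElem]
      rw [h1']
    have h3 : (L.map fun a => X - C a).prod = (P.roots.map fun a => X - C a).prod := by
      rw [← Multiset.sort_eq P.roots (· ≤ ·), ← hL]
      rfl
    rw [h1, h2, h3, ← hsp.eq_prod_roots_of_monic hm]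
  have hcont : ∀ k, Continuous fun ε => (Q ε).coeff k := by
    intro k
    apply (continuous_coeff_prod Finset.univ k).comp
    apply continuous_pi
    intro i
    exact continuous_const.add (continuous_id.mul continuous_const)
  set u : ℝ → Fin (2 * r - 1) → ℝ := fun ε j =>
    if r ≤ (j : ℕ) then (Q ε).coeff ((j : ℕ) - r + 1) else 0 with hu
  set w : ℝ → ℝ := fun ε => -((Q ε).coeff 0) with hw
  -- membership in tuplePoints for ε > 0
  have hmem : ∀ ε > 0, (u ε, (0 : ℝ), w ε) ∈ tuplePoints r := by
    intro ε hε
    have hpre : sigmaR r ⁻¹' {(u ε, (0 : ℝ), w ε)}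
        = (fun x => (u ε, x)) '' Set.range (s ε) := by
      ext p
      simp only [Set.mem_preimage, Set.mem_singleton_iff, Set.mem_image, Set.mem_range]
      constructor
      · rintro hp
        have h1 : p.1 = u ε := congrArg Prod.fst hp
        have h2 := congrArg (fun q => q.2.2) hp
        simp only [sigmaR] at h2
        -- third component equation
        have h3 : (Q ε).eval p.2 = 0 := by
          have hexp := eval_expand hr (hQm ε) (hQdeg ε) (hQcr ε) p.2
          have hcoef : ∀ k ∈ Finset.range (r - 1),
              (if h : r + k < 2 * r - 1 then p.1 ⟨r + k, h⟩ else 0) = (Q ε).coeff (k + 1) := by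
            intro k hk
            have hk' : k < r - 1 := Finset.mem_range.1 hk
            rw [dif_pos (by omega), h1, hu]
            simp only [if_pos (by omega : r ≤ r + k)]
            congr 1
            omega
          rw [Finset.sum_congr rfl fun k hk => by rw [hcoef k hk]] at h2
          rw [hexp]
          simp only [hw] at h2
          linarith [h2]
        rw [hQ] at h3
        rw [eval_prod, Finset.prod_eq_zero_iff] at h3
        obtain ⟨i, _, hi⟩ := h3
        simp only [eval_sub, eval_X, eval_C, sub_eq_zero] at hi
        exact ⟨p.2, ⟨i, hi.symm⟩, Prod.ext h1.symm rfl⟩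
      · rintro ⟨x, ⟨i, rfl⟩, rfl⟩
        simp only [sigmaR]
        refine Prod.ext rfl (Prod.ext ?_ ?_)
        · -- z₁ component is 0
          simp only
          apply Finset.sum_eq_zero
          intro k hk
          have hk' : k < r := Finset.mem_range.1 hk
          rw [dif_pos (by omega : k < 2 * r - 1), hu]
          have hval : ((⟨k, by omega⟩ : Fin (2 * r - 1)) : ℕ) = k := rfl
          simp only [hval]
          rw [if_neg (by omega), zero_mul]
        · -- z₂ component
          simp only
          have hcoef : ∀ k ∈ Finset.range (r - 1),
              (if h : r + k < 2 * r - 1 then u ε ⟨r + k, h⟩ else 0) = (Q ε).coeff (k + 1) := by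
            intro k hk
            have hk' : k < r - 1 := Finset.mem_range.1 hk
            rw [dif_pos (by omega : r + k < 2 * r - 1), hu]
            have hval : ((⟨r + k, by omega⟩ : Fin (2 * r - 1)) : ℕ) = r + k := rfl
            simp only [hval]
            rw [if_pos (by omega)]
            congr 1
            omega
          rw [Finset.sum_congr rfl fun k hk => by rw [hcoef k hk]]
          have hexp := eval_expand hr (hQm ε) (hQdeg ε) (hQcr ε) (s ε i)
          have hzero : (Q ε).eval (s ε i) = 0 := by
            rw [hQ, eval_prod]
            apply Finset.prod_eq_zero (Finset.mem_univ i)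
            simp
          rw [hzero] at hexp
          have hwε : w ε = -((Q ε).coeff 0) := rfl
          rw [hwε]
          linarith [hexp]
    rw [tuplePoints, Set.mem_setOf_eq, hpre]
    rw [Set.ncard_image_of_injective _ (fun x y h => (Prod.ext_iff.1 h).2)]
    rw [← Set.image_univ, Set.ncard_image_of_injective _ (hmono ε hε).injective]
    simp [Set.ncard_univ]
  -- convergence
  have htend : Filter.Tendsto (fun ε => (u ε, (0 : ℝ), w ε)) (nhdsWithin 0 (Set.Ioi 0))
      (nhds (t, (0 : ℝ), z₂)) := by
    apply Filter.Tendsto.mono_left _ nhdsWithin_le_nhds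
    have hu_t : Filter.Tendsto u (nhds 0) (nhds t) := by
      rw [tendsto_pi_nhds]
      intro j
      by_cases hj : r ≤ (j : ℕ)
      · have hcont' := (hcont ((j : ℕ) - r + 1)).tendsto 0
        have hval : (Q 0).coeff ((j : ℕ) - r + 1) = t j := by
          rw [hQ0, hP]
          have hj2 : (j : ℕ) - r < r - 1 := by omega
          rw [assoc_coeff_succ t z₂ hr hj2]
          congr 1
          apply Fin.ext
          simp
          omega
        simp only [hu, if_pos hj]
        rw [← hval]
        exact hcont'
      · simp only [hu, if_neg hj]
        rw [ht j (by omega)]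
        exact tendsto_const_nhds
    have hw_t : Filter.Tendsto w (nhds 0) (nhds z₂) := by
      have := ((hcont 0).tendsto 0).neg
      rw [hQ0, hP, assoc_coeff_zero t z₂ hr, neg_neg] at this
      exact this
    exact hu_t.prodMk_nhds (tendsto_const_nhds.prodMk_nhds hw_t)
  apply mem_closure_of_tendsto htend
  filter_upwards [self_mem_nhdsWithin] with ε hε
  exact hmem ε hε

/-- A point `(t, 0, z₂)` of the subspace `{z₁ = t₁ = ⋯ = t_r = 0}` lies in the
closure of the set of `(r+1)`-tuple points of `σ_r` if and only if all roots of
the associated monic polynomial `P` are real. -/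
theorem closure_tuplePoints_iff_splits (r : ℕ) (hr : 1 ≤ r)
    (t : Fin (2 * r - 1) → ℝ) (ht : ∀ k : Fin (2 * r - 1), (k : ℕ) < r → t k = 0)
    (z₂ : ℝ) :
    (t, (0 : ℝ), z₂) ∈ closure (tuplePoints r) ↔
      ((assocPoly r t z₂).map (RingHom.id ℝ)).Splits := by
  rw [Polynomial.map_id]
  constructor
  · intro hcl
    have h := closure_subset_ineq hr hcl
    exact (splits_iff_forall_abs (assoc_monic t z₂) (assoc_natDegree t z₂) (by omega)).2 h
  · intro hsp
    exact splits_mem_closure hr t ht z₂ hsp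
end
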